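/- In Mem+, the Grundy value G(n, k) is weakly decreasing in k for fixed n: if k ≤ k' then G(n, k') ≤ G(n, k). -/
import Mathlib


/-- Grundy value of Mem⁺: options of (n,k) are (n-a, a) for k < a ≤ n. -/
noncomputable def memPlusG (n k : ℕ) : ℕ :=
  sInf {v : ℕ | v ∉ ((Finset.Ioc k n).attach.image
    (fun a => memPlusG (n - a.1) a.1))}
termination_by n
decreasing_by
  have := Finset.mem_Ioc.mp a.2
  omega

lemma memPlus_compl_nonempty (F : Finset ℕ) : {v : ℕ | v ∉ F}.Nonempty := by
  refine ⟨F.sup id + 1, fun h => ?_⟩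
  have := Finset.le_sup (f := id) h
  simp only [id_eq] at this
  omega

/-- In Mem⁺, the Grundy value is weakly decreasing in k for fixed n. -/
theorem memPlus_antitone (n k k' : ℕ) (hn : 1 ≤ n) (hk : 1 ≤ k) (hkk' : k ≤ k') :
    memPlusG n k' ≤ memPlusG n k := by
  have hmem : memPlusG n k ∉ ((Finset.Ioc k n).attach.image
      (fun a => memPlusG (n - a.1) a.1)) := by
    have := Nat.sInf_mem (memPlus_compl_nonempty
      ((Finset.Ioc k n).attach.image (fun a => memPlusG (n - a.1) a.1)))
    rw [memPlusG]
    exact this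
  conv_lhs => rw [memPlusG]
  apply Nat.sInf_le
  simp only [Set.mem_setOf_eq, Finset.mem_image, Finset.mem_attach, true_and,
    Subtype.exists] at hmem ⊢
  rintro ⟨a, ha, heq⟩
  have ha' := Finset.mem_Ioc.mp ha
  exact hmem ⟨a, Finset.mem_Ioc.mpr ⟨by omega, ha'.2⟩, heq⟩
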